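/- If ω is a state on a unital C*-algebra A and B is a subalgebra of the definite algebra D_ω = {A ∈ A : ω(AX) = ω(A)ω(X) for all X ∈ A}, then the restriction ω|_B is a pure state of B. -/
import Mathlib


open scoped ComplexOrder

open Complex in
private lemma aux_expand {R : Type*} [Ring R] [StarRing R] [Algebra ℂ R] [StarModule ℂ R]
    (φ : R →ₗ[ℂ] ℂ) (h1 : φ 1 = 1) (a : R) (t : ℂ) :
    φ (star (a + t • 1) * (a + t • 1))
      = φ (star a * a) + t * φ (star a) + (starRingEnd ℂ) t * φ a
        + (starRingEnd ℂ) t * t := by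
  have : star (a + t • 1) * (a + t • 1)
      = star a * a + t • (star a * 1) + ((starRingEnd ℂ) t) • (1 * a)
        + ((starRingEnd ℂ) t * t) • (1 * 1) := by
    simp only [star_add, star_smul, star_one, add_mul, mul_add, smul_mul_assoc,
      mul_smul_comm, smul_smul]
    simp [Complex.star_def, mul_comm]
    rw [smul_smul]
    abel
  rw [this]
  simp [h1, mul_comm]

open Complex in
private lemma aux_zero {R : Type*} [Ring R] [StarRing R] [Algebra ℂ R] [StarModule ℂ R]
    (φ : R →ₗ[ℂ] ℂ) (hpos : ∀ x : R, 0 ≤ φ (star x * x)) (h1 : φ 1 = 1)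
    {a : R} (ha : φ (star a * a) = 0) : φ a = 0 := by
  have e := fun t => aux_expand φ h1 a t
  have h1' := hpos (a + (1:ℂ) • 1)
  have hI := hpos (a + (I:ℂ) • 1)
  rw [e 1, ha] at h1'
  rw [e I, ha] at hI
  rw [Complex.le_def] at h1' hI
  simp at h1' hI
  have hsc : φ (star a) = (starRingEnd ℂ) (φ a) := by
    apply Complex.ext
    · have := hI.2
      simp [Complex.conj_re] at this ⊢
      linarith
    · have := h1'.2
      simp [Complex.conj_im] at this ⊢
      linarith
  have ht := hpos (a + (-(φ a)) • 1)
  rw [e (-(φ a)), ha, hsc] at ht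
  have h0 : (0:ℂ) ≤ -((φ a) * (starRingEnd ℂ) (φ a)) := by
    convert ht using 1
    ring
  rw [Complex.le_def] at h0
  have h2 : (φ a).re ^ 2 + (φ a).im ^ 2 ≤ 0 := by
    have := h0.1
    simp [Complex.neg_re, Complex.mul_re, Complex.conj_re, Complex.conj_im] at this
    nlinarith
  apply Complex.ext <;> simp <;> nlinarith [sq_nonneg (φ a).re, sq_nonneg (φ a).im]

/-- If ω is a state on a unital C*-algebra A and B is a subalgebra of the definite algebra
`D_ω = {A ∈ A : ω(AX) = ω(A)ω(X) for all X}`, then ω restricted to B is a pure state of B,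
i.e. an extreme point of the state space of B. -/
theorem stmt_0 {A : Type*} [NormedRing A] [StarRing A] [CStarRing A]
    [NormedAlgebra ℂ A] [StarModule ℂ A] [CompleteSpace A]
    (ω : A →ₗ[ℂ] ℂ) (hpos : ∀ a : A, 0 ≤ ω (star a * a)) (hone : ω 1 = 1)
    (B : StarSubalgebra ℂ A)
    (hB : ∀ b ∈ B, ∀ x : A, ω (b * x) = ω b * ω x) :
    (ω ∘ₗ B.subtype.toAlgHom.toLinearMap) ∈
      Set.extremePoints ℝ
        {φ : B →ₗ[ℂ] ℂ | (∀ b : B, 0 ≤ φ (star b * b)) ∧ φ 1 = 1} := by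
  set ωB := ω ∘ₗ B.subtype.toAlgHom.toLinearMap with hωB
  have hωBapp : ∀ c : B, ωB c = ω (c : A) := fun c => rfl
  have hωBpos : ∀ b : B, 0 ≤ ωB (star b * b) := by
    intro b
    have : ((star b * b : B) : A) = star (b : A) * (b : A) := by simp
    rw [hωBapp, this]; exact hpos _
  have hωB1 : ωB 1 = 1 := by rw [hωBapp]; simpa using hone
  rw [mem_extremePoints]
  refine ⟨⟨hωBpos, hωB1⟩, ?_⟩
  rintro φ₁ ⟨h1pos, h11⟩ φ₂ ⟨h2pos, h21⟩ hseg
  rw [openSegment] at hseg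
  obtain ⟨s, t, hs, ht, hst, heq⟩ := hseg
  have key : ∀ c : B, φ₁ c = ωB c ∧ φ₂ c = ωB c := by
    intro c
    set d : B := c - (ω (c : A)) • 1 with hd
    have hdA : ((d : B) : A) = (c : A) - (ω (c : A)) • 1 := by simp [hd]
    have hωd : ω ((d : B) : A) = 0 := by
      rw [hdA, map_sub, map_smul]
      simp [hone]
    have hstar : ((star d * d : B) : A) = star ((d:B):A) * ((d:B):A) := by simp
    have hz : ωB (star d * d) = 0 := by
      rw [hωBapp, hstar]
      have h := hB (star ((d:B):A)) (by simpa using (star d).2) ((d:B):A)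
      rw [h, hωd, mul_zero]
    have hsum : s • φ₁ (star d * d) + t • φ₂ (star d * d) = 0 := by
      have := congrFun (congrArg DFunLike.coe heq) (star d * d)
      simpa [hz] using this
    have h1' : (0:ℂ) ≤ s • φ₁ (star d * d) := smul_nonneg hs.le (h1pos d)
    have h2' : (0:ℂ) ≤ t • φ₂ (star d * d) := smul_nonneg ht.le (h2pos d)
    have hz1' : s • φ₁ (star d * d) = 0 := by
      have hle : s • φ₁ (star d * d) ≤ 0 := by
        have h' : s • φ₁ (star d * d) = - (t • φ₂ (star d * d)) := by
          rw [eq_neg_iff_add_eq_zero]; exact hsum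
        rw [h']; exact neg_nonpos_of_nonneg h2'
      exact le_antisymm hle h1'
    have hz2' : t • φ₂ (star d * d) = 0 := by
      rw [hz1', zero_add] at hsum; exact hsum
    have hz1 : φ₁ (star d * d) = 0 := by
      rcases smul_eq_zero.mp hz1' with h | h
      · exact absurd h hs.ne'
      · exact h
    have hz2 : φ₂ (star d * d) = 0 := by
      rcases smul_eq_zero.mp hz2' with h | h
      · exact absurd h ht.ne'
      · exact h
    have e1 : φ₁ d = 0 := aux_zero φ₁ h1pos h11 hz1
    have e2 : φ₂ d = 0 := aux_zero φ₂ h2pos h21 hz2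
    rw [hd, map_sub, map_smul, sub_eq_zero] at e1 e2
    rw [h11] at e1
    rw [h21] at e2
    constructor
    · rw [e1, hωBapp]; simp
    · rw [e2, hωBapp]; simp
  refine ⟨?_, ?_⟩ <;> ext c
  · exact (key c).1
  · exact (key c).2
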